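/- Let \(Z = \{ z z' : z \in Z_3, z' \in Z_3' \} \subset A\), where \(Z_3 = \{1, a_1, a_2, a_1 a_2, a_2 a_1, a_1 a_2 a_1\}\) and \(Z_3' = \{1, a_3, a_4, a_3 a_4, a_4 a_3, a_4 a_3 a_4\}\). Suppose \(\mu, \nu, \mu', \nu' \in Z\), \(1 \le j, k \le 8\), and \(\mu a_j \nu^{-1} = \mu' a_k \nu'^{-1}\) is a nontrivial element of \(Q = \ker f\). Then \(j = k\). -/

import Mathlib

/-- The pairs of indices (0-based: `aᵢ ↦ i - 1`) of commuting generators of the group `A`: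
these encode the commutation relations `a₁a₃ = a₃a₁`, `a₁a₄ = a₄a₁`, `a₂a₃ = a₃a₂`,
`a₂a₄ = a₄a₂`, `a₁a₇ = a₇a₁`, `a₁a₈ = a₈a₁`, `a₄a₅ = a₅a₄`, `a₄a₆ = a₆a₄`, `a₅a₈ = a₈a₅`. -/
def commPairs : List (Fin 8 × Fin 8) :=
  [(0, 2), (0, 3), (1, 2), (1, 3), (0, 6), (0, 7), (3, 4), (3, 5), (4, 7)]

/-- The defining relations of the group `A`: the generators `a₁, …, a₈` (indexed by `Fin 8`)
are involutions, and the pairs listed in `commPairs` commute. -/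
def ARels : Set (FreeGroup (Fin 8)) :=
  {r | (∃ i : Fin 8, r = .of i * .of i) ∨
    ∃ p ∈ commPairs, r = .of p.1 * .of p.2 * (.of p.1)⁻¹ * (.of p.2)⁻¹}

/-- The group `A`: the graph product of 8 groups of order two determined by the
graph with edges `commPairs`. -/
abbrev GroupA := PresentedGroup ARels

/-- The images in `S₃ × S₃` of the generators of `A`:
`a₁, a₅ ↦ ((1 2), e)`, `a₂, a₆ ↦ ((2 3), e)`, `a₃, a₇ ↦ (e, (1 2))`, `a₄, a₈ ↦ (e, (2 3))`. -/
def aImage : Fin 8 → Equiv.Perm (Fin 3) × Equiv.Perm (Fin 3) :=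
  ![(Equiv.swap 0 1, 1), (Equiv.swap 1 2, 1), (1, Equiv.swap 0 1), (1, Equiv.swap 1 2),
    (Equiv.swap 0 1, 1), (Equiv.swap 1 2, 1), (1, Equiv.swap 0 1), (1, Equiv.swap 1 2)]

theorem ARels_hold : ∀ r ∈ ARels, FreeGroup.lift aImage r = 1 := by
  rintro r (⟨i, rfl⟩ | ⟨p, hp, rfl⟩)
  · simp only [map_mul, FreeGroup.lift_apply_of]
    revert i; decide
  · simp only [map_mul, map_inv, FreeGroup.lift_apply_of]
    fin_cases hp <;> decide

/-- The homomorphism `f : A → S₃ × S₃` of Proposition 6. -/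
def fA : GroupA →* Equiv.Perm (Fin 3) × Equiv.Perm (Fin 3) :=
  PresentedGroup.toGroup ARels_hold

/-- The coset representatives `Z₃ = {1, a₁, a₂, a₁a₂, a₂a₁, a₁a₂a₁} ⊆ A`. -/
def Zthree : Set GroupA :=
  {1, PresentedGroup.of 0, PresentedGroup.of 1,
    PresentedGroup.of 0 * PresentedGroup.of 1,
    PresentedGroup.of 1 * PresentedGroup.of 0,
    PresentedGroup.of 0 * PresentedGroup.of 1 * PresentedGroup.of 0}

/-- The coset representatives `Z₃' = {1, a₃, a₄, a₃a₄, a₄a₃, a₄a₃a₄} ⊆ A`. -/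
def Zthree' : Set GroupA :=
  {1, PresentedGroup.of 2, PresentedGroup.of 3,
    PresentedGroup.of 2 * PresentedGroup.of 3,
    PresentedGroup.of 3 * PresentedGroup.of 2,
    PresentedGroup.of 3 * PresentedGroup.of 2 * PresentedGroup.of 3}

/-- The system `Z = Z₃ · Z₃'` of representatives of the cosets of `Q = ker f` in `A`. -/
def Zreps : Set GroupA := {x | ∃ z ∈ Zthree, ∃ z' ∈ Zthree', x = z * z'}

/-! ### Auxiliary machinery -/

section Aux

open DihedralGroup PresentedGroup

lemma rel_one {r : FreeGroup (Fin 8)} (hr : r ∈ ARels) : PresentedGroup.mk ARels r = 1 :=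
  (QuotientGroup.eq_one_iff r).2 (Subgroup.subset_normalClosure hr)

lemma of_sq (i : Fin 8) : (PresentedGroup.of i : GroupA) * PresentedGroup.of i = 1 := by
  exact rel_one (r := .of i * .of i) (Or.inl ⟨i, rfl⟩)

lemma of_sq' (i : Fin 8) (x : GroupA) :
    (PresentedGroup.of i : GroupA) * (PresentedGroup.of i * x) = x := by
  rw [← mul_assoc, of_sq, one_mul]

lemma of_inv (i : Fin 8) : (PresentedGroup.of i : GroupA)⁻¹ = PresentedGroup.of i :=
  inv_eq_of_mul_eq_one_right (of_sq i)

lemma of_comm {i j : Fin 8} (h : (i, j) ∈ commPairs) :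
    Commute (PresentedGroup.of i : GroupA) (PresentedGroup.of j) := by
  have := rel_one (r := .of i * .of j * (.of i)⁻¹ * (.of j)⁻¹) (Or.inr ⟨(i,j), h, rfl⟩)
  simp only [map_mul, map_inv] at this
  exact commutatorElement_eq_one_iff_commute.mp this

/-- The six elements of `Z₃`. -/
def w3 : Fin 6 → GroupA := fun i =>
  match i.val with
  | 0 => 1
  | 1 => .of 0
  | 2 => .of 1
  | 3 => .of 0 * .of 1
  | 4 => .of 1 * .of 0
  | _ => .of 0 * .of 1 * .of 0

/-- The six elements of `Z₃'`. -/
def w3' : Fin 6 → GroupA := fun i =>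
  match i.val with
  | 0 => 1
  | 1 => .of 2
  | 2 => .of 3
  | 3 => .of 2 * .of 3
  | 4 => .of 3 * .of 2
  | _ => .of 3 * .of 2 * .of 3

lemma memZthree {x : GroupA} (h : x ∈ Zthree) : ∃ i : Fin 6, x = w3 i := by
  rcases h with rfl | rfl | rfl | rfl | rfl | rfl
  exacts [⟨0, rfl⟩, ⟨1, rfl⟩, ⟨2, rfl⟩, ⟨3, rfl⟩, ⟨4, rfl⟩, ⟨5, rfl⟩]

lemma memZthree' {x : GroupA} (h : x ∈ Zthree') : ∃ i : Fin 6, x = w3' i := by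
  rcases h with rfl | rfl | rfl | rfl | rfl | rfl
  exacts [⟨0, rfl⟩, ⟨1, rfl⟩, ⟨2, rfl⟩, ⟨3, rfl⟩, ⟨4, rfl⟩, ⟨5, rfl⟩]

/-- The images of the generators in `D₆ × D₆`. -/
def phiImage : Fin 8 → DihedralGroup 6 × DihedralGroup 6 := fun i =>
  match i.val with
  | 0 => (sr 0, 1)
  | 1 => (sr 1, 1)
  | 2 => (1, sr 0)
  | 3 => (1, sr 1)
  | _ => (1, 1)

theorem phiRels_hold : ∀ r ∈ ARels, FreeGroup.lift phiImage r = 1 := by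
  rintro r (⟨i, rfl⟩ | ⟨p, hp, rfl⟩)
  · simp only [map_mul, FreeGroup.lift_apply_of]
    revert i; decide
  · simp only [map_mul, map_inv, FreeGroup.lift_apply_of]
    fin_cases hp <;> decide

/-- The homomorphism `A → D₆ × D₆`. -/
def phiA : GroupA →* DihedralGroup 6 × DihedralGroup 6 :=
  PresentedGroup.toGroup phiRels_hold

/-- The images of the generators in `(ℤ/2)⁴` recording the exponent sums of `a₅,…,a₈`. -/
def piImage : Fin 8 → Multiplicative (ZMod 2 × ZMod 2 × ZMod 2 × ZMod 2) := fun i =>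
  match i.val with
  | 4 => Multiplicative.ofAdd (1,0,0,0)
  | 5 => Multiplicative.ofAdd (0,1,0,0)
  | 6 => Multiplicative.ofAdd (0,0,1,0)
  | 7 => Multiplicative.ofAdd (0,0,0,1)
  | _ => 1

theorem piRels_hold : ∀ r ∈ ARels, FreeGroup.lift piImage r = 1 := by
  rintro r (⟨i, rfl⟩ | ⟨p, hp, rfl⟩)
  · simp only [map_mul, FreeGroup.lift_apply_of]
    revert i; decide
  · simp only [map_mul, map_inv, FreeGroup.lift_apply_of]
    fin_cases hp <;> decide

/-- The homomorphism `A → (ℤ/2)⁴`. -/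
def piA : GroupA →* Multiplicative (ZMod 2 × ZMod 2 × ZMod 2 × ZMod 2) :=
  PresentedGroup.toGroup piRels_hold

/-- `D₆`-values of the elements of `Z₃`. -/
def d3 : Fin 6 → DihedralGroup 6 := fun i =>
  match i.val with
  | 0 => 1
  | 1 => sr 0
  | 2 => sr 1
  | 3 => sr 0 * sr 1
  | 4 => sr 1 * sr 0
  | _ => sr 0 * sr 1 * sr 0

/-- `D₆`-values of the elements of `Z₃'`. -/
def d3' : Fin 6 → DihedralGroup 6 := fun i =>
  match i.val with
  | 0 => 1
  | 1 => sr 0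
  | 2 => sr 1
  | 3 => sr 0 * sr 1
  | 4 => sr 1 * sr 0
  | _ => sr 1 * sr 0 * sr 1

/-- `S₃`-values of the elements of `Z₃`. -/
def s3v : Fin 6 → Equiv.Perm (Fin 3) := fun i =>
  match i.val with
  | 0 => 1
  | 1 => Equiv.swap 0 1
  | 2 => Equiv.swap 1 2
  | 3 => Equiv.swap 0 1 * Equiv.swap 1 2
  | 4 => Equiv.swap 1 2 * Equiv.swap 0 1
  | _ => Equiv.swap 0 1 * Equiv.swap 1 2 * Equiv.swap 0 1

/-- `S₃`-values of the elements of `Z₃'`. -/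
def s3v' : Fin 6 → Equiv.Perm (Fin 3) := fun i =>
  match i.val with
  | 0 => 1
  | 1 => Equiv.swap 0 1
  | 2 => Equiv.swap 1 2
  | 3 => Equiv.swap 0 1 * Equiv.swap 1 2
  | 4 => Equiv.swap 1 2 * Equiv.swap 0 1
  | _ => Equiv.swap 1 2 * Equiv.swap 0 1 * Equiv.swap 1 2

/-- `D₆`-value of a letter (`0` = no letter). -/
def dl : Fin 3 → DihedralGroup 6 := fun u =>
  match u.val with
  | 1 => sr 0
  | 2 => sr 1
  | _ => 1

/-- `S₃`-value of a letter. -/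
def sl : Fin 3 → Equiv.Perm (Fin 3) := fun u =>
  match u.val with
  | 1 => Equiv.swap 0 1
  | 2 => Equiv.swap 1 2
  | _ => 1

/-- The first-factor letter of `a_j` as an element of `A`. -/
def xof : Fin 3 → GroupA := fun u =>
  match u.val with
  | 1 => .of 0
  | 2 => .of 1
  | _ => 1

/-- The second-factor letter of `a_j` as an element of `A`. -/
def yof : Fin 3 → GroupA := fun u =>
  match u.val with
  | 1 => .of 2
  | 2 => .of 3
  | _ => 1

/-- First-factor letter index of each generator `a_j`, `j < 4`. -/
def ufun : Fin 8 → Fin 3 := fun j =>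
  match j.val with
  | 0 => 1
  | 1 => 2
  | _ => 0

/-- Second-factor letter index of each generator `a_j`, `j < 4`. -/
def vfun : Fin 8 → Fin 3 := fun j =>
  match j.val with
  | 2 => 1
  | 3 => 2
  | _ => 0

lemma ofsplit (j : Fin 8) (hj : j.val < 4) :
    (PresentedGroup.of j : GroupA) = xof (ufun j) * yof (vfun j) := by
  fin_cases j
  · simp [ufun, vfun, xof, yof]
  · simp [ufun, vfun, xof, yof]
  · simp [ufun, vfun, xof, yof]
  · simp [ufun, vfun, xof, yof]
  all_goals exact absurd hj (by decide)

lemma phi_w3 (i : Fin 6) : phiA (w3 i) = (d3 i, 1) := by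
  fin_cases i <;>
    simp [w3, d3, phiA, map_mul, PresentedGroup.toGroup.of, phiImage, Prod.ext_iff] <;> decide

lemma phi_w3' (i : Fin 6) : phiA (w3' i) = (1, d3' i) := by
  fin_cases i <;>
    simp [w3', d3', phiA, map_mul, PresentedGroup.toGroup.of, phiImage, Prod.ext_iff] <;> decide

lemma f_w3 (i : Fin 6) : fA (w3 i) = (s3v i, 1) := by
  fin_cases i <;>
    simp [w3, s3v, fA, map_mul, PresentedGroup.toGroup.of, aImage, Prod.ext_iff] <;> decide

lemma f_w3' (i : Fin 6) : fA (w3' i) = (1, s3v' i) := by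
  fin_cases i <;>
    simp [w3', s3v', fA, map_mul, PresentedGroup.toGroup.of, aImage, Prod.ext_iff] <;> decide

lemma pi_w3 (i : Fin 6) : piA (w3 i) = 1 := by
  fin_cases i <;> simp [w3, piA, map_mul, PresentedGroup.toGroup.of, piImage] <;> decide

lemma pi_w3' (i : Fin 6) : piA (w3' i) = 1 := by
  fin_cases i <;> simp [w3', piA, map_mul, PresentedGroup.toGroup.of, piImage] <;> decide

lemma pi_of (j : Fin 8) : piA (PresentedGroup.of j) = piImage j :=
  PresentedGroup.toGroup.of piRels_hold

lemma phi_x (u : Fin 3) : phiA (xof u) = (dl u, 1) := by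
  fin_cases u <;> simp [xof, dl, phiA, PresentedGroup.toGroup.of, phiImage, Prod.ext_iff]

lemma phi_y (u : Fin 3) : phiA (yof u) = (1, dl u) := by
  fin_cases u <;> simp [yof, dl, phiA, PresentedGroup.toGroup.of, phiImage, Prod.ext_iff]

lemma f_x (u : Fin 3) : fA (xof u) = (sl u, 1) := by
  fin_cases u <;> simp [xof, sl, fA, PresentedGroup.toGroup.of, aImage, Prod.ext_iff]

lemma f_y (u : Fin 3) : fA (yof u) = (1, sl u) := by
  fin_cases u <;> simp [yof, sl, fA, PresentedGroup.toGroup.of, aImage, Prod.ext_iff]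

lemma comm_aux {x : GroupA} (h2 : Commute x (PresentedGroup.of 2))
    (h3 : Commute x (PresentedGroup.of 3)) (i : Fin 6) : Commute x (w3' i) := by
  fin_cases i
  · exact Commute.one_right x
  · exact h2
  · exact h3
  · exact h2.mul_right h3
  · exact h3.mul_right h2
  · exact (h3.mul_right h2).mul_right h3

lemma comm_x_w3' (u : Fin 3) (i : Fin 6) : Commute (xof u) (w3' i) := by
  fin_cases u
  · exact Commute.one_left _
  · exact comm_aux (of_comm (by decide)) (of_comm (by decide)) i
  · exact comm_aux (of_comm (by decide)) (of_comm (by decide)) i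

lemma Key1 (i₁ i₂ : Fin 6) (u : Fin 3) (h : d3 i₁ * dl u * (d3 i₂)⁻¹ = 1) :
    w3 i₁ * xof u * (w3 i₂)⁻¹ = 1 := by
  fin_cases i₁ <;> fin_cases i₂ <;> fin_cases u <;>
    first
      | exact absurd h (by decide)
      | simp [w3, xof, mul_inv_rev, of_inv, mul_assoc, of_sq, of_sq']

lemma Key1' (i₁ i₂ : Fin 6) (u : Fin 3) (h : d3' i₁ * dl u * (d3' i₂)⁻¹ = 1) :
    w3' i₁ * yof u * (w3' i₂)⁻¹ = 1 := by
  fin_cases i₁ <;> fin_cases i₂ <;> fin_cases u <;>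
    first
      | exact absurd h (by decide)
      | simp [w3', yof, mul_inv_rev, of_inv, mul_assoc, of_sq, of_sq']

lemma KeyA : ∀ (i₁ i₂ m₁ m₂ : Fin 6) (u v : Fin 3),
    s3v i₁ * sl u * (s3v i₂)⁻¹ = 1 → s3v m₁ * sl v * (s3v m₂)⁻¹ = 1 →
    d3 i₁ * dl u * (d3 i₂)⁻¹ = d3 m₁ * dl v * (d3 m₂)⁻¹ →
    d3 i₁ * dl u * (d3 i₂)⁻¹ ≠ 1 → u = v ∧ u ≠ 0 := by decide

lemma KeyA' : ∀ (i₁ i₂ m₁ m₂ : Fin 6) (u v : Fin 3),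
    s3v' i₁ * sl u * (s3v' i₂)⁻¹ = 1 → s3v' m₁ * sl v * (s3v' m₂)⁻¹ = 1 →
    d3' i₁ * dl u * (d3' i₂)⁻¹ = d3' m₁ * dl v * (d3' m₂)⁻¹ →
    d3' i₁ * dl u * (d3' i₂)⁻¹ ≠ 1 → u = v ∧ u ≠ 0 := by decide

lemma piKey : ∀ j k : Fin 8, piImage j = piImage k → (j.val < 4 ∧ k.val < 4) ∨ j = k := by
  decide

lemma uKey : ∀ j k : Fin 8, j.val < 4 → k.val < 4 → ufun j = ufun k → ufun j ≠ 0 → j = k := by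
  decide

lemma vKey : ∀ j k : Fin 8, j.val < 4 → k.val < 4 → vfun j = vfun k → vfun j ≠ 0 → j = k := by
  decide

end Aux


/-- **Lemma 7.** If `μ aⱼ ν⁻¹ = μ' aₖ ν'⁻¹` is a nontrivial element of `Q = ker f`,
with `μ, ν, μ', ν' ∈ Z`, then `j = k`. -/
theorem index_determined (μ ν μ' ν' : GroupA)
    (hμ : μ ∈ Zreps) (hν : ν ∈ Zreps) (hμ' : μ' ∈ Zreps) (hν' : ν' ∈ Zreps)
    (j k : Fin 8)
    (heq : μ * PresentedGroup.of j * ν⁻¹ = μ' * PresentedGroup.of k * ν'⁻¹)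
    (hker : μ * PresentedGroup.of j * ν⁻¹ ∈ MonoidHom.ker fA)
    (hne : μ * PresentedGroup.of j * ν⁻¹ ≠ 1) :
    j = k := by
  obtain ⟨z1, hz1, z2, hz2, rfl⟩ := hμ
  obtain ⟨z3, hz3, z4, hz4, rfl⟩ := hν
  obtain ⟨z5, hz5, z6, hz6, rfl⟩ := hμ'
  obtain ⟨z7, hz7, z8, hz8, rfl⟩ := hν'
  obtain ⟨i₁, rfl⟩ := memZthree hz1
  obtain ⟨i₁', rfl⟩ := memZthree' hz2
  obtain ⟨i₂, rfl⟩ := memZthree hz3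
  obtain ⟨i₂', rfl⟩ := memZthree' hz4
  obtain ⟨m₁, rfl⟩ := memZthree hz5
  obtain ⟨m₁', rfl⟩ := memZthree' hz6
  obtain ⟨m₂, rfl⟩ := memZthree hz7
  obtain ⟨m₂', rfl⟩ := memZthree' hz8
  -- Step 1: indices ≥ 4 are handled by the abelianized invariant `piA`.
  have hpi : piImage j = piImage k := by
    have h := congrArg piA heq
    simpa only [map_mul, map_inv, pi_w3, pi_w3', pi_of, one_mul, mul_one, inv_one] using h
  rcases piKey j k hpi with ⟨hj, hk⟩ | hjk
  swap
  · exact hjk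
  -- Step 2: both indices are < 4.
  rw [ofsplit j hj] at heq hker hne
  rw [ofsplit k hk] at heq
  have hker' := hker
  rw [heq] at hker'
  rw [MonoidHom.mem_ker] at hker hker'
  have hφ := congrArg phiA heq
  simp only [map_mul, map_inv, phi_w3, phi_w3', phi_x, phi_y, Prod.mk_mul_mk, Prod.inv_mk,
    one_mul, mul_one, inv_one, Prod.mk.injEq] at hφ
  obtain ⟨E1, E2⟩ := hφ
  simp only [map_mul, map_inv, f_w3, f_w3', f_x, f_y, Prod.mk_mul_mk, Prod.inv_mk,
    one_mul, mul_one, inv_one, Prod.mk_eq_one] at hker hker'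
  obtain ⟨S1, S2⟩ := hker
  obtain ⟨S1', S2'⟩ := hker'
  have hcontra : ¬(d3 i₁ * dl (ufun j) * (d3 i₂)⁻¹ = 1 ∧
      d3' i₁' * dl (vfun j) * (d3' i₂')⁻¹ = 1) := by
    rintro ⟨h1, h2⟩
    apply hne
    have e1 : w3 i₁ * xof (ufun j) = w3 i₂ := mul_inv_eq_one.mp (Key1 _ _ _ h1)
    have e2 : w3' i₁' * yof (vfun j) = w3' i₂' := mul_inv_eq_one.mp (Key1' _ _ _ h2)
    rw [mul_inv_eq_one]
    calc w3 i₁ * w3' i₁' * (xof (ufun j) * yof (vfun j))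
        = w3 i₁ * (w3' i₁' * xof (ufun j)) * yof (vfun j) := by
          simp only [mul_assoc]
      _ = w3 i₁ * (xof (ufun j) * w3' i₁') * yof (vfun j) := by
          rw [(comm_x_w3' (ufun j) i₁').eq]
      _ = (w3 i₁ * xof (ufun j)) * (w3' i₁' * yof (vfun j)) := by
          simp only [mul_assoc]
      _ = w3 i₂ * w3' i₂' := by rw [e1, e2]
  by_cases hd : d3 i₁ * dl (ufun j) * (d3 i₂)⁻¹ = 1
  · have hd2 : d3' i₁' * dl (vfun j) * (d3' i₂')⁻¹ ≠ 1 := fun h => hcontra ⟨hd, h⟩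
    obtain ⟨huv, hn0⟩ := KeyA' i₁' i₂' m₁' m₂' _ _ S2 S2' E2 hd2
    exact vKey j k hj hk huv hn0
  · obtain ⟨huv, hn0⟩ := KeyA i₁ i₂ m₁ m₂ _ _ S1 S1' E1 hd
    exact uKey j k hj hk huv hn0
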